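/- The fullerene nanodisc D_2 admits no proper total coloring with a set of 4 colors in which all 24 radial edges receive one common color. -/
import Mathlib


/-- A proper total coloring of `G`: `cv` colors the vertices, `ce` colors the edges
(as unordered pairs); adjacent vertices get different colors, an edge gets a color
different from both of its endpoints, and edges sharing an endpoint get different colors. -/
def IsTotalColoring {V C : Type*} (G : SimpleGraph V) (cv : V → C) (ce : Sym2 V → C) : Prop :=
  (∀ ⦃u v : V⦄, G.Adj u v → cv u ≠ cv v) ∧
  (∀ ⦃u v : V⦄, G.Adj u v → ce s(u, v) ≠ cv u) ∧
  (∀ ⦃u v w : V⦄, G.Adj u v → G.Adj u w → v ≠ w → ce s(u, v) ≠ ce s(u, w))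

/-- The vertices of the fullerene nanodisc `D_2`: the outer 6-cycle `O`, the two
central 18-cycles `A` and `B`, and the inner 6-cycle `I`. -/
inductive D2V
  | O : ZMod 6 → D2V
  | A : ZMod 18 → D2V
  | B : ZMod 18 → D2V
  | I : ZMod 6 → D2V
  deriving DecidableEq, Fintype

open D2V in
/-- The adjacency generating relation of `D_2`: the four cycles, the 6 outer radial
edges `O_i — A_{3i}`, the 6 inner radial edges `I_i — B_{3i}`, and the 12 central
radial edges `A_k — B_{k+1}` for `k ≡ 1 (mod 3)` and `A_k — B_{k+2}` for `k ≡ 2 (mod 3)`. -/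
def d2Rel : D2V → D2V → Bool
  | O i, O j => j == i + 1
  | A k, A l => l == k + 1
  | B k, B l => l == k + 1
  | I i, I j => j == i + 1
  | O i, A k => k == (3 * i.val : ZMod 18)
  | I i, B k => k == (3 * i.val : ZMod 18)
  | A k, B l => (k.val % 3 == 1 && l == k + 1) || (k.val % 3 == 2 && l == k + 2)
  | _, _ => false

/-- The fullerene nanodisc `D_2`. -/
def D2 : SimpleGraph D2V := SimpleGraph.fromRel (fun a b => d2Rel a b = true)

/-- Auxiliary: a generating edge of `D2` is an edge. -/
lemma adjD2 {a b : D2V} (hne : a ≠ b) (h : d2Rel a b = true) : D2.Adj a b := ⟨hne, Or.inl h⟩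

/-- In `Fin 4`, the color distinct from three pairwise distinct colors is unique. -/
lemma fin4_unique : ∀ t a b e e' : Fin 4,
    ¬(t ≠ a ∧ t ≠ b ∧ a ≠ b ∧ e ≠ t ∧ e ≠ a ∧ e ≠ b ∧
      e' ≠ t ∧ e' ≠ a ∧ e' ≠ b ∧ e ≠ e') := by decide

/-- In `Fin 4`, there are no five pairwise distinct colors. -/
lemma fin4_five : ∀ a b c d e : Fin 4,
    ¬(a ≠ b ∧ a ≠ c ∧ a ≠ d ∧ a ≠ e ∧ b ≠ c ∧ b ≠ d ∧ b ≠ e ∧ c ≠ d ∧ c ≠ e ∧ d ≠ e) := by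
  decide

/-- On a path `y0—y1—y2—y3` (with edge colors `e0,e1,e2`) properly totally colored
avoiding the color `t`, the vertex colors repeat with period 3. -/
lemma step4 (t y0 y1 y2 y3 e0 e1 e2 : Fin 4)
    (hy0 : y0 ≠ t) (hy1 : y1 ≠ t) (hy2 : y2 ≠ t) (hy3 : y3 ≠ t)
    (he0 : e0 ≠ t) (he1 : e1 ≠ t) (he2 : e2 ≠ t)
    (h01 : y0 ≠ y1) (h12 : y1 ≠ y2) (h23 : y2 ≠ y3)
    (e0y0 : e0 ≠ y0) (e0y1 : e0 ≠ y1) (e1y1 : e1 ≠ y1) (e1y2 : e1 ≠ y2)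
    (e2y2 : e2 ≠ y2) (e2y3 : e2 ≠ y3) (hee0 : e0 ≠ e1) (hee1 : e1 ≠ e2) : y3 = y0 := by
  have h02 : y0 ≠ y2 := by
    intro h
    exact fin4_unique t y0 y1 e0 e1
      ⟨hy0.symm, hy1.symm, h01, he0, e0y0, e0y1, he1, by rw [h]; exact e1y2, e1y1, hee0⟩
  have h13 : y1 ≠ y3 := by
    intro h
    exact fin4_unique t y1 y2 e1 e2
      ⟨hy1.symm, hy2.symm, h12, he1, e1y1, e1y2, he2, by rw [h]; exact e2y3, e2y2, hee1⟩
  by_contra h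
  exact fin4_unique t y1 y2 y0 y3
    ⟨hy1.symm, hy2.symm, h12, hy0, h01, h02, hy3, h13.symm, h23.symm, fun hh => h hh.symm⟩

theorem D2_no_four_total_coloring_all_radial_monochromatic :
    ¬ ∃ (cv : D2V → Fin 4) (ce : Sym2 D2V → Fin 4) (t : Fin 4),
      IsTotalColoring D2 cv ce ∧
      (∀ i : ZMod 6, ce s(D2V.O i, D2V.A (3 * i.val : ZMod 18)) = t) ∧
      (∀ i : ZMod 6, ce s(D2V.I i, D2V.B (3 * i.val : ZMod 18)) = t) ∧
      (∀ k : ZMod 18, k.val % 3 = 1 → ce s(D2V.A k, D2V.B (k + 1)) = t) ∧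
      (∀ k : ZMod 18, k.val % 3 = 2 → ce s(D2V.A k, D2V.B (k + 2)) = t) := by
  rintro ⟨cv, ce, t, ⟨hv, hev, hee⟩, hO, _hI, h4, h5⟩
  open D2V in
  -- symmetric form of the edge–endpoint condition
  have hev' : ∀ u v : D2V, D2.Adj u v → ce s(u, v) ≠ cv v := by
    intro u v h
    have := hev h.symm
    rwa [Sym2.eq_swap] at this
  -- adjacencies
  have aO01 : D2.Adj (O 0) (O 1) := adjD2 (by decide) (by decide)
  have aO12 : D2.Adj (O 1) (O 2) := adjD2 (by decide) (by decide)
  have aOA0 : D2.Adj (O 0) (A 0) := adjD2 (by decide) (by decide)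
  have aOA3 : D2.Adj (O 1) (A 3) := adjD2 (by decide) (by decide)
  have aOA6 : D2.Adj (O 2) (A 6) := adjD2 (by decide) (by decide)
  have aA0 : D2.Adj (A 0) (A 1) := adjD2 (by decide) (by decide)
  have aA1 : D2.Adj (A 1) (A 2) := adjD2 (by decide) (by decide)
  have aA2 : D2.Adj (A 2) (A 3) := adjD2 (by decide) (by decide)
  have aA3 : D2.Adj (A 3) (A 4) := adjD2 (by decide) (by decide)
  have aA4 : D2.Adj (A 4) (A 5) := adjD2 (by decide) (by decide)
  have aA5 : D2.Adj (A 5) (A 6) := adjD2 (by decide) (by decide)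
  have aAB1 : D2.Adj (A 1) (B (1 + 1)) := adjD2 (by decide) (by decide)
  have aAB2 : D2.Adj (A 2) (B (2 + 2)) := adjD2 (by decide) (by decide)
  have aAB4 : D2.Adj (A 4) (B (4 + 1)) := adjD2 (by decide) (by decide)
  have aAB5 : D2.Adj (A 5) (B (5 + 2)) := adjD2 (by decide) (by decide)
  -- the relevant radial edges have color t
  have r0 : ce s(O 0, A 0) = t := by have h := hO 0; norm_num at h; exact h
  have r3 : ce s(O 1, A 3) = t := by have h := hO 1; norm_num at h; exact h
  have r6 : ce s(O 2, A 6) = t := by have h := hO 2; norm_num at h; exact h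
  have rP0 : ce s(A 0, O 0) = t := by rw [Sym2.eq_swap]; exact r0
  have rP1 : ce s(A 1, B (1 + 1)) = t := h4 1 (by decide)
  have rP2 : ce s(A 2, B (2 + 2)) = t := h5 2 (by decide)
  have rP3 : ce s(A 3, O 1) = t := by rw [Sym2.eq_swap]; exact r3
  have rP4 : ce s(A 4, B (4 + 1)) = t := h4 4 (by decide)
  have rP5 : ce s(A 5, B (5 + 2)) = t := h5 5 (by decide)
  have rP6 : ce s(A 6, O 2) = t := by rw [Sym2.eq_swap]; exact r6
  -- A-vertex colors avoid t
  have yt0 : cv (A 0) ≠ t := by have h := hev aOA0.symm; rw [rP0] at h; exact h.symm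
  have yt1 : cv (A 1) ≠ t := by have h := hev aAB1; rw [rP1] at h; exact h.symm
  have yt2 : cv (A 2) ≠ t := by have h := hev aAB2; rw [rP2] at h; exact h.symm
  have yt3 : cv (A 3) ≠ t := by have h := hev aOA3.symm; rw [rP3] at h; exact h.symm
  have yt4 : cv (A 4) ≠ t := by have h := hev aAB4; rw [rP4] at h; exact h.symm
  have yt5 : cv (A 5) ≠ t := by have h := hev aAB5; rw [rP5] at h; exact h.symm
  have yt6 : cv (A 6) ≠ t := by have h := hev aOA6.symm; rw [rP6] at h; exact h.symm
  -- A-cycle edge colors avoid t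
  have et0 : ce s(A 0, A 1) ≠ t := by
    have h := hee aA0 aOA0.symm (by decide); rwa [rP0] at h
  have et1 : ce s(A 1, A 2) ≠ t := by
    have h := hee aA1 aAB1 (by decide); rwa [rP1] at h
  have et2 : ce s(A 2, A 3) ≠ t := by
    have h := hee aA2 aAB2 (by decide); rwa [rP2] at h
  have et3 : ce s(A 3, A 4) ≠ t := by
    have h := hee aA3 aOA3.symm (by decide); rwa [rP3] at h
  have et4 : ce s(A 4, A 5) ≠ t := by
    have h := hee aA4 aAB4 (by decide); rwa [rP4] at h
  have et5 : ce s(A 5, A 6) ≠ t := by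
    have h := hee aA5 aAB5 (by decide); rwa [rP5] at h
  -- consecutive A-cycle edges get different colors
  have ee0 : ce s(A 0, A 1) ≠ ce s(A 1, A 2) := by
    have h := hee aA0.symm aA1 (by decide); rwa [Sym2.eq_swap] at h
  have ee1 : ce s(A 1, A 2) ≠ ce s(A 2, A 3) := by
    have h := hee aA1.symm aA2 (by decide); rwa [Sym2.eq_swap] at h
  have ee2 : ce s(A 2, A 3) ≠ ce s(A 3, A 4) := by
    have h := hee aA2.symm aA3 (by decide); rwa [Sym2.eq_swap] at h
  have ee3 : ce s(A 3, A 4) ≠ ce s(A 4, A 5) := by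
    have h := hee aA3.symm aA4 (by decide); rwa [Sym2.eq_swap] at h
  have ee4 : ce s(A 4, A 5) ≠ ce s(A 5, A 6) := by
    have h := hee aA4.symm aA5 (by decide); rwa [Sym2.eq_swap] at h
  -- periodicity of the A-vertex colors
  have eq30 : cv (A 3) = cv (A 0) :=
    step4 t (cv (A 0)) (cv (A 1)) (cv (A 2)) (cv (A 3))
      (ce s(A 0, A 1)) (ce s(A 1, A 2)) (ce s(A 2, A 3))
      yt0 yt1 yt2 yt3 et0 et1 et2
      (hv aA0) (hv aA1) (hv aA2)
      (hev aA0) (hev' _ _ aA0) (hev aA1) (hev' _ _ aA1) (hev aA2) (hev' _ _ aA2)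
      ee0 ee1
  have eq63 : cv (A 6) = cv (A 3) :=
    step4 t (cv (A 3)) (cv (A 4)) (cv (A 5)) (cv (A 6))
      (ce s(A 3, A 4)) (ce s(A 4, A 5)) (ce s(A 5, A 6))
      yt3 yt4 yt5 yt6 et3 et4 et5
      (hv aA3) (hv aA4) (hv aA5)
      (hev aA3) (hev' _ _ aA3) (hev aA4) (hev' _ _ aA4) (hev aA5) (hev' _ _ aA5)
      ee3 ee4
  -- O-vertex colors avoid t
  have xt0 : cv (O 0) ≠ t := by have h := hev aOA0; rw [r0] at h; exact h.symm
  have xt1 : cv (O 1) ≠ t := by have h := hev aOA3; rw [r3] at h; exact h.symm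
  have xt2 : cv (O 2) ≠ t := by have h := hev aOA6; rw [r6] at h; exact h.symm
  -- O-cycle edge colors
  have dt0 : ce s(O 0, O 1) ≠ t := by
    have h := hee aO01 aOA0 (by decide); rwa [r0] at h
  have dt1 : ce s(O 1, O 2) ≠ t := by
    have h := hee aO12 aOA3 (by decide); rwa [r3] at h
  have hd01 : ce s(O 0, O 1) ≠ ce s(O 1, O 2) := by
    have h := hee aO01.symm aO12 (by decide); rwa [Sym2.eq_swap] at h
  -- O_0, O_1, O_2 have pairwise distinct colors
  have hx02 : cv (O 0) ≠ cv (O 2) := by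
    intro h
    exact fin4_unique t (cv (O 0)) (cv (O 1)) (ce s(O 0, O 1)) (ce s(O 1, O 2))
      ⟨xt0.symm, xt1.symm, hv aO01, dt0, hev aO01, hev' _ _ aO01, dt1,
        by rw [h]; exact hev' _ _ aO12, hev aO12, hd01⟩
  -- the common color of A_0, A_3, A_6 differs from all of them: contradiction
  have ax0 : cv (A 0) ≠ cv (O 0) := (hv aOA0).symm
  have ax1 : cv (A 0) ≠ cv (O 1) := by rw [← eq30]; exact (hv aOA3).symm
  have ax2 : cv (A 0) ≠ cv (O 2) := by rw [← eq30, ← eq63]; exact (hv aOA6).symm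
  exact fin4_five t (cv (O 0)) (cv (O 1)) (cv (O 2)) (cv (A 0))
    ⟨xt0.symm, xt1.symm, xt2.symm, yt0.symm, hv aO01, hx02, ax0.symm,
      hv aO12, ax1.symm, ax2.symm⟩
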